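/- Let μ > 0, λ ∈ ℝ with λ + 2μ > 0, κ > 0, R > 0, and let m ≥ 2 be an integer. For ε ∈ (0, 1/2) consider the model narrow region Ω_R := {(x₁, x₂) ∈ ℝ² : |x₁| < R, −ε/2 − (κ/2)|x₁|^m < x₂ < ε/2 + (κ/2)|x₁|^m}, with δ(x₁) := ε + κ|x₁|^m and ū(x₁, x₂) := (x₂ + ε/2 + (κ/2)|x₁|^m)/δ(x₁). Let ψ₃(x) := (x₂, −x₁)ᵀ be the rotational rigid displacement, and define the elastic energy density W_{λ,μ}(v) := λ(∂₁v¹ + ∂₂v²)² + μ[2(∂₁v¹)² + (∂₂v¹ + ∂₁v²)² + 2(∂₂v²)²]. Then there exists a constant C > 0, depending only on λ, μ, κ, m, R and not on ε, such that for all ε ∈ (0, 1/2): |∫_{Ω_R} W_{λ,μ}(ū·ψ₃) dx − (λ+2μ)·∫_{−R}^{R} x₁²/δ(x₁) dx₁| ≤ C. -/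

import Mathlib

open MeasureTheory intervalIntegral

/-- Partial derivative in the first variable of a function of two real variables. -/
noncomputable def pd1 (g : ℝ → ℝ → ℝ) (x y : ℝ) : ℝ := deriv (fun s => g s y) x

/-- Partial derivative in the second variable of a function of two real variables. -/
noncomputable def pd2 (g : ℝ → ℝ → ℝ) (x y : ℝ) : ℝ := deriv (fun s => g x s) y

/-- Isotropic elastic energy density
`W_{λ,μ}(v) = λ(∂₁v¹+∂₂v²)² + μ[2(∂₁v¹)² + (∂₂v¹+∂₁v²)² + 2(∂₂v²)²]`
of a planar vector field `v = (v¹, v²)`. -/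
noncomputable def W2 (lam mu : ℝ) (v1 v2 : ℝ → ℝ → ℝ) (x y : ℝ) : ℝ :=
  lam * (pd1 v1 x y + pd2 v2 x y) ^ 2 +
    mu * (2 * (pd1 v1 x y) ^ 2 + (pd2 v1 x y + pd1 v2 x y) ^ 2 + 2 * (pd2 v2 x y) ^ 2)

section Aux

lemma hasDerivAt_abs_pow (m : ℕ) (hm : 2 ≤ m) (s : ℝ) :
    HasDerivAt (fun x : ℝ => |x| ^ m) ((m : ℝ) * |s| ^ (m - 2) * s) s := by
  have hm1 : m - 2 + 1 = m - 1 := by omega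
  rcases lt_trichotomy s 0 with hs | hs | hs
  · have h1 : HasDerivAt (fun x : ℝ => (-x) ^ m) ((m : ℝ) * (-s) ^ (m - 1) * (-1)) s := by
      have := (hasDerivAt_pow m (-s)).comp s (hasDerivAt_neg s)
      simpa [Function.comp_def] using this
    have h2 : (fun x : ℝ => |x| ^ m) =ᶠ[nhds s] fun x => (-x) ^ m := by
      filter_upwards [Iio_mem_nhds hs] with x (hx : x < 0)
      rw [abs_of_neg hx]
    have h3 : (m : ℝ) * (-s) ^ (m - 1) * (-1) = (m : ℝ) * |s| ^ (m - 2) * s := by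
      rw [abs_of_neg hs, ← hm1, pow_succ]
      ring
    exact h3 ▸ (h1.congr_of_eventuallyEq h2)
  · subst hs
    have hz : (m:ℝ) * |(0:ℝ)| ^ (m - 2) * 0 = 0 := by ring
    rw [hz]
    rw [hasDerivAt_iff_isLittleO]
    simp only [abs_zero, zero_pow (by omega : m ≠ 0), sub_zero, smul_zero]
    have h1 : (fun x : ℝ => |x| ^ (m - 1)) =o[nhds 0] (fun _ => (1:ℝ)) := by
      rw [Asymptotics.isLittleO_one_iff]
      have : ContinuousAt (fun x : ℝ => |x| ^ (m-1)) 0 := by fun_prop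
      simpa [zero_pow (by omega : m - 1 ≠ 0)] using this.tendsto
    have h2 : (fun x : ℝ => |x|) =O[nhds 0] (fun x : ℝ => x) := by
      apply Asymptotics.isBigO_of_le
      intro x; simp
    have := h1.mul_isBigO h2
    simp only [one_mul] at this
    apply this.congr_left
    intro x
    rw [← pow_succ, (by omega : m - 1 + 1 = m)]
  · have h1 : HasDerivAt (fun x : ℝ => x ^ m) ((m : ℝ) * s ^ (m - 1)) s := hasDerivAt_pow m s
    have h2 : (fun x : ℝ => |x| ^ m) =ᶠ[nhds s] fun x => x ^ m := by
      filter_upwards [Ioi_mem_nhds hs] with x (hx : 0 < x)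
      rw [abs_of_pos hx]
    have h3 : (m : ℝ) * s ^ (m - 1) = (m : ℝ) * |s| ^ (m - 2) * s := by
      rw [abs_of_pos hs, ← hm1, pow_succ]; ring
    exact h3 ▸ (h1.congr_of_eventuallyEq h2)

/-- `δ(s) = ε + κ|s|^m`. -/
noncomputable def dd (κ ε : ℝ) (m : ℕ) (s : ℝ) : ℝ := ε + κ * |s| ^ m

/-- `δ'(s)`. -/
noncomputable def dpp (κ : ℝ) (m : ℕ) (s : ℝ) : ℝ := κ * ((m : ℝ) * |s| ^ (m - 2) * s)

/-- The pointwise value of the energy density, a polynomial in `t`. -/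
noncomputable def FP (lam mu κ ε : ℝ) (m : ℕ) (p : ℝ × ℝ) : ℝ :=
  (lam + 2*mu) * (dpp κ m p.1)^2/(dd κ ε m p.1)^4 * p.2^4
  + (2*lam*p.1*(dpp κ m p.1)/(dd κ ε m p.1)^3
     + mu*(1/(dd κ ε m p.1) + p.1*(dpp κ m p.1)/(dd κ ε m p.1)^2)^2) * p.2^2
  + (lam + 2*mu)*p.1^2/(dd κ ε m p.1)^2

/-- The error term in the inner integral. -/
noncomputable def Err (lam mu κ ε : ℝ) (m : ℕ) (s : ℝ) : ℝ :=
  lam*((dpp κ m s)^2*(dd κ ε m s)/80 + s*(dpp κ m s)/6)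
  + mu*((dpp κ m s)^2*(dd κ ε m s)/40 + (dd κ ε m s)/12 + s*(dpp κ m s)/6
        + s^2*(dpp κ m s)^2/(12*(dd κ ε m s)))

/-- The uniform bound. -/
noncomputable def Bb (lam mu κ R : ℝ) (m : ℕ) : ℝ :=
  |lam| * ((κ*(m:ℝ)*R^(m-1))^2*(1/2 + κ*R^m)/80 + R*(κ*(m:ℝ)*R^(m-1))/6)
  + mu*((κ*(m:ℝ)*R^(m-1))^2*(1/2 + κ*R^m)/40 + (1/2 + κ*R^m)/12
        + R*(κ*(m:ℝ)*R^(m-1))/6 + κ*(m:ℝ)^2*R^m/12)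

lemma W2_poly (lam mu κ ε : ℝ) (m : ℕ) (hm : 2 ≤ m) (hκ : 0 < κ) (hε : 0 < ε) (s t : ℝ) :
    W2 lam mu (fun s t => (t + ε/2 + κ/2*|s|^m)/(ε + κ*|s|^m) * t)
              (fun s t => -((t + ε/2 + κ/2*|s|^m)/(ε + κ*|s|^m) * s)) s t
    = FP lam mu κ ε m (s, t) := by
  have hd : (0:ℝ) < ε + κ * |s| ^ m := by positivity
  have hA := hasDerivAt_abs_pow m hm s
  have hden : HasDerivAt (fun x : ℝ => ε + κ * |x| ^ m)
      (κ * ((m : ℝ) * |s| ^ (m - 2) * s)) s := (hA.const_mul κ).const_add ε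
  have hnum : HasDerivAt (fun x : ℝ => t + ε/2 + κ/2 * |x| ^ m)
      (κ/2 * ((m : ℝ) * |s| ^ (m - 2) * s)) s := (hA.const_mul (κ/2)).const_add (t + ε/2)
  have hq : HasDerivAt (fun x : ℝ => (t + ε/2 + κ/2*|x|^m)/(ε + κ*|x|^m))
      ((κ/2 * ((m : ℝ) * |s| ^ (m - 2) * s) * (ε + κ*|s|^m)
        - (t + ε/2 + κ/2*|s|^m) * (κ * ((m : ℝ) * |s| ^ (m - 2) * s))) / (ε + κ*|s|^m)^2) s :=
    hnum.div hden hd.ne'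
  have h1 := (hq.mul_const t).deriv
  have h2 := ((hq.mul (hasDerivAt_id s)).neg).deriv
  have hy : HasDerivAt (fun y : ℝ => (y + ε/2 + κ/2*|s|^m)/(ε + κ*|s|^m))
      (1/(ε + κ*|s|^m)) t := by
    have := (((hasDerivAt_id t).add_const (ε/2)).add_const (κ/2*|s|^m)).div_const
      (ε + κ*|s|^m)
    simpa using this
  have h3 := (hy.mul (hasDerivAt_id t)).deriv
  have h4 := ((hy.mul_const s).neg).deriv
  simp only [W2, pd1, pd2, FP, dd, dpp]
  simp only [id_eq, Pi.neg_def, Pi.mul_def] at h2 h3 h4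
  rw [h1, h2, h3, h4]
  set B := |s| ^ m with hBdef
  set P := |s| ^ (m - 2) with hPdef
  field_simp
  ring

lemma poly_int (c4 c2 c0 g : ℝ) :
    (∫ t in (-g)..g, (c4*t^4 + c2*t^2 + c0)) = 2*(c4*g^5/5 + c2*g^3/3 + c0*g) := by
  have i4 : IntervalIntegrable (fun t : ℝ => c4*t^4) volume (-g) g :=
    (by fun_prop : Continuous fun t : ℝ => c4*t^4).intervalIntegrable _ _
  have i2 : IntervalIntegrable (fun t : ℝ => c2*t^2) volume (-g) g :=
    (by fun_prop : Continuous fun t : ℝ => c2*t^2).intervalIntegrable _ _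
  have i0 : IntervalIntegrable (fun _ : ℝ => c0) volume (-g) g :=
    intervalIntegrable_const
  rw [intervalIntegral.integral_add (i4.add i2) i0, intervalIntegral.integral_add i4 i2,
      intervalIntegral.integral_const_mul, intervalIntegral.integral_const_mul,
      integral_pow, integral_pow, intervalIntegral.integral_const]
  simp only [smul_eq_mul]
  norm_num
  ring

lemma fubini_region (F : ℝ × ℝ → ℝ) (hF : Continuous F) (g : ℝ → ℝ) (hg : Continuous g)
    (hgpos : ∀ s, 0 < g s) (R : ℝ) (hR : 0 < R) :
    ∫ p in {p : ℝ × ℝ | |p.1| < R ∧ -g p.1 < p.2 ∧ p.2 < g p.1}, F p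
      = ∫ s in (-R)..R, ∫ t in (-g s)..(g s), F (s, t) := by
  set Ω : Set (ℝ × ℝ) := {p : ℝ × ℝ | |p.1| < R ∧ -g p.1 < p.2 ∧ p.2 < g p.1} with hΩ
  have hopen : IsOpen Ω := by
    have h1 : IsOpen {p : ℝ × ℝ | |p.1| < R} :=
      isOpen_lt (continuous_fst.abs) continuous_const
    have h2 : IsOpen {p : ℝ × ℝ | -g p.1 < p.2} :=
      isOpen_lt ((hg.comp continuous_fst).neg) continuous_snd
    have h3 : IsOpen {p : ℝ × ℝ | p.2 < g p.1} :=
      isOpen_lt continuous_snd (hg.comp continuous_fst)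
    have : Ω = {p : ℝ × ℝ | |p.1| < R} ∩
        ({p : ℝ × ℝ | -g p.1 < p.2} ∩ {p : ℝ × ℝ | p.2 < g p.1}) := by
      ext p; simp [hΩ, Set.mem_setOf_eq, and_assoc]
    rw [this]
    exact h1.inter (h2.inter h3)
  have hmeas : MeasurableSet Ω := hopen.measurableSet
  obtain ⟨x₀, hx₀, hx₀max⟩ := isCompact_Icc.exists_isMaxOn
    (Set.nonempty_Icc.mpr (by linarith : -R ≤ R)) hg.continuousOn
  set M := g x₀ with hM
  have hMpos : 0 < M := hgpos x₀
  have hsub : Ω ⊆ Set.Icc (-R) R ×ˢ Set.Icc (-M) M := by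
    rintro ⟨x, y⟩ ⟨h1, h2, h3⟩
    have hx : x ∈ Set.Icc (-R) R := by
      constructor <;> [linarith [abs_lt.mp h1]; linarith [abs_lt.mp h1]]
    have hgx : g x ≤ M := hx₀max hx
    exact ⟨hx, by constructor <;> simp_all <;> linarith⟩
  have hint : IntegrableOn F Ω := by
    refine (hF.continuousOn.integrableOn_compact
      (isCompact_Icc.prod isCompact_Icc)).mono_set hsub
  have hind : Integrable (Ω.indicator F) := (integrable_indicator_iff hmeas).mpr hint
  rw [← MeasureTheory.integral_indicator hmeas]
  rw [Measure.volume_eq_prod] at hind ⊢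
  rw [integral_prod _ hind]
  have key : ∀ x : ℝ, (∫ y, Ω.indicator F (x, y)) =
      (Set.Ioo (-R) R).indicator (fun x => ∫ t in (-g x)..(g x), F (x, t)) x := by
    intro x
    by_cases hx : |x| < R
    · have hxm : x ∈ Set.Ioo (-R) R := by
        rcases abs_lt.mp hx with ⟨h1, h2⟩; exact ⟨h1, h2⟩
      rw [Set.indicator_of_mem hxm]
      have heq : ∀ y : ℝ, Ω.indicator F (x, y) =
          (Set.Ioo (-g x) (g x)).indicator (fun y => F (x, y)) y := by
        intro y
        by_cases hy : y ∈ Set.Ioo (-g x) (g x)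
        · rw [Set.indicator_of_mem hy, Set.indicator_of_mem]
          exact ⟨hx, hy.1, hy.2⟩
        · rw [Set.indicator_of_notMem hy, Set.indicator_of_notMem]
          rintro ⟨-, h2, h3⟩; exact hy ⟨h2, h3⟩
      rw [show (fun y => Ω.indicator F (x, y)) =
        (Set.Ioo (-g x) (g x)).indicator (fun y => F (x, y)) from funext heq]
      rw [MeasureTheory.integral_indicator measurableSet_Ioo]
      rw [intervalIntegral.integral_of_le (by linarith [hgpos x] : -g x ≤ g x)]
      exact (integral_Ioc_eq_integral_Ioo).symm
    · have hxm : x ∉ Set.Ioo (-R) R := by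
        intro h; exact hx (abs_lt.mpr ⟨h.1, h.2⟩)
      rw [Set.indicator_of_notMem hxm]
      have hzz : ∀ y : ℝ, Ω.indicator F (x, y) = 0 := by
        intro y
        apply Set.indicator_of_notMem
        rintro ⟨h1, -⟩; exact hx h1
      simp [hzz]
  rw [show (fun x => ∫ y, Ω.indicator F (x, y)) =
    (Set.Ioo (-R) R).indicator (fun x => ∫ t in (-g x)..(g x), F (x, t)) from funext key]
  rw [MeasureTheory.integral_indicator measurableSet_Ioo]
  rw [intervalIntegral.integral_of_le (by linarith : -R ≤ R), integral_Ioc_eq_integral_Ioo]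

lemma Err_bound (lam mu κ R ε : ℝ) (m : ℕ) (hm : 2 ≤ m) (hκ : 0 < κ) (hR : 0 < R)
    (hmu : 0 < mu) (hε0 : 0 < ε) (hε2 : ε < 1/2) (s : ℝ) (hsR : |s| ≤ R) :
    |Err lam mu κ ε m s| ≤ Bb lam mu κ R m := by
  have hd0 : 0 < dd κ ε m s := by unfold dd; positivity
  have hK0 : (0:ℝ) ≤ κ*(m:ℝ)*R^(m-1) := by positivity
  have hD0 : (0:ℝ) < 1/2 + κ*R^m := by positivity
  have habs : |s|^(m-1) ≤ R^(m-1) := pow_le_pow_left₀ (abs_nonneg s) hsR _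
  have habsm : |s|^m ≤ R^m := pow_le_pow_left₀ (abs_nonneg s) hsR _
  have hpK : |dpp κ m s| ≤ κ*(m:ℝ)*R^(m-1) := by
    have : |dpp κ m s| = κ*(m:ℝ)*|s|^(m-1) := by
      unfold dpp
      rw [abs_mul, abs_mul, abs_mul, abs_of_pos hκ, Nat.abs_cast, abs_pow, abs_abs,
        (by omega : m - 1 = m - 2 + 1), pow_succ]
      ring
    rw [this]
    exact mul_le_mul_of_nonneg_left habs (by positivity)
  have hp2 : (dpp κ m s)^2 ≤ (κ*(m:ℝ)*R^(m-1))^2 := by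
    rw [← sq_abs (dpp κ m s)]
    exact pow_le_pow_left₀ (abs_nonneg _) hpK 2
  have hdD : dd κ ε m s ≤ 1/2 + κ*R^m := by
    unfold dd
    have : κ * |s|^m ≤ κ * R^m := mul_le_mul_of_nonneg_left habsm hκ.le
    linarith
  have hsp : |s * dpp κ m s| ≤ R*(κ*(m:ℝ)*R^(m-1)) := by
    rw [abs_mul]
    exact mul_le_mul hsR hpK (abs_nonneg _) hR.le
  have hlast : s^2*(dpp κ m s)^2/(12*(dd κ ε m s)) ≤ κ*(m:ℝ)^2*R^m/12 := by
    have e1 : s^2*(dpp κ m s)^2 = κ^2*(m:ℝ)^2*(|s|^m)^2 := by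
      have e2 : (|s|^(m-2))^2 * s^4 = (|s|^m)^2 := by
        have e3 : s^4 = |s|^4 := by
          rw [← abs_pow]
          rw [abs_of_nonneg (by positivity : (0:ℝ) ≤ s^4)]
        rw [e3, ← pow_mul, ← pow_add, ← pow_mul]
        congr 1
        omega
      unfold dpp
      calc s^2*(κ * ((m:ℝ) * |s|^(m-2) * s))^2
          = κ^2*(m:ℝ)^2*((|s|^(m-2))^2 * s^4) := by ring
        _ = κ^2*(m:ℝ)^2*(|s|^m)^2 := by rw [e2]
    have h2 : κ*|s|^m ≤ dd κ ε m s := by unfold dd; linarith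
    have h3 : s^2*(dpp κ m s)^2 ≤ (κ*(m:ℝ)^2*R^m) * (dd κ ε m s) := by
      rw [e1]
      calc κ^2*(m:ℝ)^2*(|s|^m)^2 = (κ*(m:ℝ)^2*|s|^m) * (κ*|s|^m) := by ring
        _ ≤ (κ*(m:ℝ)^2*R^m) * (dd κ ε m s) := by
            apply mul_le_mul _ h2 (by positivity) (by positivity)
            exact mul_le_mul_of_nonneg_left habsm (by positivity)
    rw [div_le_div_iff₀ (by positivity) (by norm_num)]
    nlinarith [h3, hd0]
  have hlast0 : 0 ≤ s^2*(dpp κ m s)^2/(12*(dd κ ε m s)) := by positivity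
  unfold Err Bb
  set K := κ*(m:ℝ)*R^(m-1) with hKdef
  set D := (1:ℝ)/2 + κ*R^m with hDdef
  set p := dpp κ m s with hpdef
  set d := dd κ ε m s with hddef
  have hT1 : |p^2*d/80 + s*p/6| ≤ K^2*D/80 + R*K/6 := by
    refine (abs_add_le _ _).trans (add_le_add ?_ ?_)
    · rw [abs_of_nonneg (by positivity : (0:ℝ) ≤ p^2*d/80)]
      gcongr
    · rw [abs_div, abs_of_nonneg (by norm_num : (0:ℝ) ≤ (6:ℝ))]
      gcongr
  have hT2 : |p^2*d/40 + d/12 + s*p/6 + s^2*p^2/(12*d)| ≤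
      K^2*D/40 + D/12 + R*K/6 + κ*(m:ℝ)^2*R^m/12 := by
    refine (abs_add_le _ _).trans (add_le_add ((abs_add_le _ _).trans
      (add_le_add ((abs_add_le _ _).trans (add_le_add ?_ ?_)) ?_)) ?_)
    · rw [abs_of_nonneg (by positivity : (0:ℝ) ≤ p^2*d/40)]
      gcongr
    · rw [abs_of_nonneg (by positivity : (0:ℝ) ≤ d/12)]
      gcongr
    · rw [abs_div, abs_of_nonneg (by norm_num : (0:ℝ) ≤ (6:ℝ))]
      gcongr
    · rw [abs_of_nonneg hlast0]
      exact hlast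
  calc |lam*(p^2*d/80 + s*p/6) + mu*(p^2*d/40 + d/12 + s*p/6 + s^2*p^2/(12*d))|
      ≤ |lam| * |p^2*d/80 + s*p/6| + mu*|p^2*d/40 + d/12 + s*p/6 + s^2*p^2/(12*d)| := by
        refine (abs_add_le _ _).trans ?_
        rw [abs_mul, abs_mul, abs_of_pos hmu]
    _ ≤ |lam| * (K^2*D/80 + R*K/6) + mu*(K^2*D/40 + D/12 + R*K/6 + κ*(m:ℝ)^2*R^m/12) := by
        gcongr

lemma key_est (lam mu κ R : ℝ) (m : ℕ) (hmu : 0 < mu) (hκ : 0 < κ) (hR : 0 < R)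
    (hm : 2 ≤ m) (ε : ℝ) (hε0 : 0 < ε) (hε2 : ε < 1/2) :
    |(∫ p in {p : ℝ × ℝ | |p.1| < R ∧
         -ε / 2 - κ / 2 * |p.1| ^ m < p.2 ∧ p.2 < ε / 2 + κ / 2 * |p.1| ^ m},
        W2 lam mu (fun s t => (t + ε / 2 + κ / 2 * |s| ^ m) / (ε + κ * |s| ^ m) * t)
          (fun s t => -((t + ε / 2 + κ / 2 * |s| ^ m) / (ε + κ * |s| ^ m) * s)) p.1 p.2) -
       (lam + 2 * mu) * ∫ x₁ in (-R)..R, x₁ ^ 2 / (ε + κ * |x₁| ^ m)|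
      ≤ Bb lam mu κ R m * (2*R) := by
  have hddpos : ∀ s : ℝ, (0:ℝ) < ε + κ * |s| ^ m := fun s => by positivity
  have hW : (fun p : ℝ × ℝ =>
      W2 lam mu (fun s t => (t + ε / 2 + κ / 2 * |s| ^ m) / (ε + κ * |s| ^ m) * t)
        (fun s t => -((t + ε / 2 + κ / 2 * |s| ^ m) / (ε + κ * |s| ^ m) * s)) p.1 p.2)
      = FP lam mu κ ε m := funext fun p => W2_poly lam mu κ ε m hm hκ hε0 p.1 p.2
  rw [hW]
  have hset : {p : ℝ × ℝ | |p.1| < R ∧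
        -ε / 2 - κ / 2 * |p.1| ^ m < p.2 ∧ p.2 < ε / 2 + κ / 2 * |p.1| ^ m}
      = {p : ℝ × ℝ | |p.1| < R ∧
        -(ε / 2 + κ / 2 * |p.1| ^ m) < p.2 ∧ p.2 < ε / 2 + κ / 2 * |p.1| ^ m} := by
    ext p
    simp only [Set.mem_setOf_eq]
    constructor <;> rintro ⟨h1, h2, h3⟩ <;> exact ⟨h1, by linarith, h3⟩
  rw [hset]
  have hFc : Continuous (FP lam mu κ ε m) := by
    unfold FP dd dpp
    fun_prop (disch := intros; positivity)
  have hg : Continuous (fun s : ℝ => ε / 2 + κ / 2 * |s| ^ m) := by fun_prop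
  have hgpos : ∀ s : ℝ, (0:ℝ) < ε / 2 + κ / 2 * |s| ^ m := fun s => by positivity
  have hfub : (∫ p in {p : ℝ × ℝ | |p.1| < R ∧
        -(ε / 2 + κ / 2 * |p.1| ^ m) < p.2 ∧ p.2 < ε / 2 + κ / 2 * |p.1| ^ m},
        FP lam mu κ ε m p)
      = ∫ s in (-R)..R, ∫ t in (-(ε / 2 + κ / 2 * |s| ^ m))..(ε / 2 + κ / 2 * |s| ^ m),
          FP lam mu κ ε m (s, t) :=
    fubini_region _ hFc _ hg hgpos R hR
  rw [hfub]
  have hinner : ∀ s : ℝ,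
      (∫ t in (-(ε / 2 + κ / 2 * |s| ^ m))..(ε / 2 + κ / 2 * |s| ^ m),
        FP lam mu κ ε m (s, t))
      = (lam + 2*mu) * (s^2/(ε + κ * |s| ^ m)) + Err lam mu κ ε m s := by
    intro s
    rw [show (fun t => FP lam mu κ ε m (s, t)) = (fun t =>
        ((lam + 2*mu) * (dpp κ m s)^2/(dd κ ε m s)^4) * t^4
        + (2*lam*s*(dpp κ m s)/(dd κ ε m s)^3
           + mu*(1/(dd κ ε m s) + s*(dpp κ m s)/(dd κ ε m s)^2)^2) * t^2
        + (lam + 2*mu)*s^2/(dd κ ε m s)^2) from rfl]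
    rw [poly_int]
    unfold Err dd dpp
    have hd : (0:ℝ) < ε + κ * |s| ^ m := hddpos s
    set B := |s| ^ m with hB
    set P := |s| ^ (m - 2) with hP
    field_simp
    ring
  rw [show (fun s => ∫ t in (-(ε / 2 + κ / 2 * |s| ^ m))..(ε / 2 + κ / 2 * |s| ^ m),
      FP lam mu κ ε m (s, t))
    = (fun s => (lam + 2*mu) * (s^2/(ε + κ * |s| ^ m)) + Err lam mu κ ε m s)
    from funext hinner]
  have hc1 : Continuous (fun s : ℝ => (lam + 2*mu) * (s^2/(ε + κ * |s| ^ m))) :=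
    continuous_const.mul (Continuous.div (by fun_prop) (by fun_prop)
      (fun s => (hddpos s).ne'))
  have hcErr : Continuous (Err lam mu κ ε m) := by
    unfold Err dd dpp
    fun_prop (disch := intros; positivity)
  rw [intervalIntegral.integral_add (hc1.intervalIntegrable _ _)
    (hcErr.intervalIntegrable _ _), intervalIntegral.integral_const_mul]
  rw [show (∫ x₁ in (-R)..R, x₁ ^ 2 / (ε + κ * |x₁| ^ m))
    = ∫ s in (-R)..R, s ^ 2 / (ε + κ * |s| ^ m) from rfl]
  rw [add_sub_cancel_left]
  have hb : |∫ s in (-R)..R, Err lam mu κ ε m s| ≤ Bb lam mu κ R m * |R - (-R)| := by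
    rw [← Real.norm_eq_abs]
    apply intervalIntegral.norm_integral_le_of_norm_le_const
    intro x hx
    rw [Set.uIoc_of_le (by linarith : -R ≤ R)] at hx
    rw [Real.norm_eq_abs]
    exact Err_bound lam mu κ R ε m hm hκ hR hmu hε0 hε2 x (abs_le.mpr ⟨hx.1.le, hx.2⟩)
  calc |∫ s in (-R)..R, Err lam mu κ ε m s| ≤ Bb lam mu κ R m * |R - (-R)| := hb
    _ = Bb lam mu κ R m * (2*R) := by
        rw [abs_of_pos (by linarith : (0:ℝ) < R - (-R))]
        ring

end Aux

/-- In the model narrow region with `δ(x₁) = ε + κ|x₁|^m`, the elastic energy of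
`ū·ψ₃`, where `ψ₃(x) = (x₂, −x₁)ᵀ` is the rotational rigid displacement, equals
`(λ+2μ)·∫_{−R}^{R} x₁²/δ(x₁) dx₁` up to an error bounded uniformly in `ε`. -/
theorem stmt19 (lam mu κ R : ℝ) (m : ℕ) (hmu : 0 < mu) (hlm : 0 < lam + 2 * mu)
    (hκ : 0 < κ) (hR : 0 < R) (hm : 2 ≤ m) :
    ∃ C > 0, ∀ ε : ℝ, 0 < ε → ε < 1 / 2 →
      (let δ : ℝ → ℝ := fun s => ε + κ * |s| ^ m
       let ub : ℝ → ℝ → ℝ := fun s t => (t + ε / 2 + κ / 2 * |s| ^ m) / δ s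
       let Ω : Set (ℝ × ℝ) := {p : ℝ × ℝ | |p.1| < R ∧
         -ε / 2 - κ / 2 * |p.1| ^ m < p.2 ∧ p.2 < ε / 2 + κ / 2 * |p.1| ^ m}
       let v1 : ℝ → ℝ → ℝ := fun s t => ub s t * t
       let v2 : ℝ → ℝ → ℝ := fun s t => -(ub s t * s)
       |(∫ p in Ω, W2 lam mu v1 v2 p.1 p.2) -
           (lam + 2 * mu) * ∫ x₁ in (-R)..R, x₁ ^ 2 / δ x₁| ≤ C) := by
  refine ⟨Bb lam mu κ R m * (2*R), ?_, ?_⟩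
  · unfold Bb
    positivity
  · intro ε h1 h2
    exact key_est lam mu κ R m hmu hκ hR hm ε h1 h2
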